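/- Let n be a natural number, r, r₁,…,rₙ ∈ ℚ, let P(t) = ∏_{i=1}^n (1 + rᵢ·t + (rᵢ²/2)·t²) ∈ ℚ[t], and let {P}₅ denote the truncation of P to its terms of degree ≤ 5. Then 7! times the coefficient of t⁷ in (1 + r·t + (r²/2)·t²)·{P}₅ equals 630·r²·(e₂·e₃ − e₁·e₄ − e₅), where e_j denotes the j-th elementary symmetric polynomial of r₁,…,rₙ (with e_j = 0 for j > n). -/

import Mathlib

open Polynomial Finset

/-- The `j`-th elementary symmetric polynomial of the rationals `r 0, …, r (n-1)`. -/
noncomputable def esymmQ (n : ℕ) (r : Fin n → ℚ) (j : ℕ) : ℚ :=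
  ∑ s ∈ Finset.univ.powersetCard j, ∏ i ∈ s, r i

/-- Truncation of a polynomial to its terms of degree at most `m`. -/
noncomputable def truncPoly (P : Polynomial ℚ) (m : ℕ) : Polynomial ℚ :=
  ∑ k ∈ Finset.range (m + 1), C (P.coeff k) * X ^ k

lemma truncPoly_coeff (P : Polynomial ℚ) (m k : ℕ) :
    (truncPoly P m).coeff k = if k ≤ m then P.coeff k else 0 := by
  simp only [truncPoly, finset_sum_coeff, coeff_C_mul, coeff_X_pow, mul_ite, mul_one, mul_zero]
  rw [Finset.sum_ite_eq (Finset.range (m + 1)) k fun x => P.coeff x]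
  simp [Nat.lt_succ_iff]

/-- Coefficient of a product with a quadratic factor. -/
lemma coeff_quad_mul (a b : ℚ) (Q : Polynomial ℚ) (k : ℕ) :
    ((1 + C a * X + C b * X ^ 2) * Q).coeff (k + 2) =
      Q.coeff (k + 2) + a * Q.coeff (k + 1) + b * Q.coeff k := by
  rw [add_mul, add_mul, one_mul, coeff_add, coeff_add, mul_assoc, coeff_C_mul,
    mul_assoc, coeff_C_mul]
  have h1 : (X * Q).coeff (k + 2) = Q.coeff (k + 1) := by
    have := Polynomial.coeff_X_mul Q (k + 1)
    simpa [add_assoc] using this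
  have h2 : (X ^ 2 * Q).coeff (k + 2) = Q.coeff k := Polynomial.coeff_X_pow_mul Q 2 k
  rw [h1, h2]

/-- Power sum. -/
def powQ (n : ℕ) (r : Fin n → ℚ) (k : ℕ) : ℚ := ∑ i, r i ^ k

/-- The main simultaneous induction: coefficients of the two products in terms of
power sums. -/
lemma key_coeffs : ∀ (n : ℕ) (rr : Fin n → ℚ),
    let Q := ∏ i : Fin n, (1 + C (rr i) * X)
    let P := ∏ i : Fin n, (1 + C (rr i) * X + C ((rr i) ^ 2 / 2) * X ^ 2)
    let e1 := powQ n rr 1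
    let p2 := powQ n rr 2
    let p3 := powQ n rr 3
    let p4 := powQ n rr 4
    let p5 := powQ n rr 5
    Q.coeff 0 = 1 ∧ Q.coeff 1 = e1 ∧ 2 * Q.coeff 2 = e1 ^ 2 - p2 ∧
      6 * Q.coeff 3 = e1 ^ 3 - 3 * e1 * p2 + 2 * p3 ∧
      24 * Q.coeff 4 = e1 ^ 4 - 6 * e1 ^ 2 * p2 + 3 * p2 ^ 2 + 8 * e1 * p3 - 6 * p4 ∧
      120 * Q.coeff 5 = e1 ^ 5 - 10 * e1 ^ 3 * p2 + 15 * e1 * p2 ^ 2 + 20 * e1 ^ 2 * p3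
        - 20 * p2 * p3 - 30 * e1 * p4 + 24 * p5 ∧
      P.coeff 0 = 1 ∧ P.coeff 1 = e1 ∧ 2 * P.coeff 2 = e1 ^ 2 ∧
      6 * P.coeff 3 = e1 ^ 3 - p3 ∧
      24 * P.coeff 4 = e1 ^ 4 - 4 * e1 * p3 + 3 * p4 ∧
      120 * P.coeff 5 = e1 ^ 5 - 10 * e1 ^ 2 * p3 + 15 * e1 * p4 - 6 * p5 := by
  intro n
  induction n with
  | zero =>
    intro rr
    simp [powQ, Polynomial.coeff_one]
  | succ m ih =>
    intro rr
    obtain ⟨hq0, hq1, hq2, hq3, hq4, hq5, hp0, hp1, hp2, hp3, hp4, hp5⟩ :=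
      ih (fun i => rr i.succ)
    set a := rr 0 with ha
    have hQ : (∏ i : Fin (m + 1), (1 + C (rr i) * X)) =
        (1 + C a * X + C 0 * X ^ 2) * ∏ i : Fin m, (1 + C (rr i.succ) * X) := by
      rw [Fin.prod_univ_succ]; simp; exact Or.inl rfl
    have hP : (∏ i : Fin (m + 1), (1 + C (rr i) * X + C ((rr i) ^ 2 / 2) * X ^ 2)) =
        (1 + C a * X + C (a ^ 2 / 2) * X ^ 2) *
          ∏ i : Fin m, (1 + C (rr i.succ) * X + C ((rr i.succ) ^ 2 / 2) * X ^ 2) := by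
      rw [Fin.prod_univ_succ]
    have hpow : ∀ k, powQ (m + 1) rr k = a ^ k + powQ m (fun i => rr i.succ) k := by
      intro k; simp [powQ, Fin.sum_univ_succ, ha]
    set Q' := ∏ i : Fin m, (1 + C (rr i.succ) * X) with hQ'
    set P' := ∏ i : Fin m, (1 + C (rr i.succ) * X + C ((rr i.succ) ^ 2 / 2) * X ^ 2) with hP'
    have cq : ∀ k, ((1 + C a * X + C 0 * X ^ 2) * Q').coeff (k + 2) =
        Q'.coeff (k + 2) + a * Q'.coeff (k + 1) + 0 * Q'.coeff k := coeff_quad_mul a 0 Q'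
    have cp : ∀ k, ((1 + C a * X + C (a ^ 2 / 2) * X ^ 2) * P').coeff (k + 2) =
        P'.coeff (k + 2) + a * P'.coeff (k + 1) + (a ^ 2 / 2) * P'.coeff k :=
      coeff_quad_mul a (a ^ 2 / 2) P'
    have cq0 : ((1 + C a * X + C 0 * X ^ 2) * Q').coeff 0 = Q'.coeff 0 := by
      simp [mul_coeff_zero]
    have cp0 : ((1 + C a * X + C (a ^ 2 / 2) * X ^ 2) * P').coeff 0 = P'.coeff 0 := by
      simp [mul_coeff_zero]
    have cq1 : ((1 + C a * X + C 0 * X ^ 2) * Q').coeff 1 =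
        Q'.coeff 1 + a * Q'.coeff 0 := by
      rw [add_mul, add_mul, one_mul, coeff_add, coeff_add, mul_assoc, coeff_C_mul,
        mul_assoc, coeff_C_mul]
      simp [Polynomial.coeff_X_pow_mul' Q' 2 1]
    have cp1 : ((1 + C a * X + C (a ^ 2 / 2) * X ^ 2) * P').coeff 1 =
        P'.coeff 1 + a * P'.coeff 0 := by
      rw [add_mul, add_mul, one_mul, coeff_add, coeff_add, mul_assoc, coeff_C_mul,
        mul_assoc, coeff_C_mul]
      simp [Polynomial.coeff_X_pow_mul' P' 2 1]
    refine ⟨?_, ?_, ?_, ?_, ?_, ?_, ?_, ?_, ?_, ?_, ?_, ?_⟩ <;>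
      simp only [hQ, hP, hpow] <;>
      first
        | (rw [cq0]; linear_combination hq0)
        | (rw [cp0]; linear_combination hp0)
        | (rw [cq1]; linear_combination hq1 + a * hq0)
        | (rw [cp1]; linear_combination hp1 + a * hp0)
        | (rw [cq 0]; linear_combination hq2 + 2 * a * hq1)
        | (rw [cp 0]; linear_combination hp2 + 2 * a * hp1 + a ^ 2 * hp0)
        | (rw [cq 1]; linear_combination hq3 + 3 * a * hq2)
        | (rw [cp 1]; linear_combination hp3 + 3 * a * hp2 + 3 * a ^ 2 * hp1)
        | (rw [cq 2]; linear_combination hq4 + 4 * a * hq3)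
        | (rw [cp 2]; linear_combination hp4 + 4 * a * hp3 + 6 * a ^ 2 * hp2)
        | (rw [cq 3]; linear_combination hq5 + 5 * a * hq4)
        | (rw [cp 3]; linear_combination hp5 + 5 * a * hp4 + 10 * a ^ 2 * hp3)

/-- `esymmQ` is a coefficient of the product `∏ (1 + rᵢ X)`. -/
lemma esymmQ_eq_coeff (n : ℕ) (rr : Fin n → ℚ) (j : ℕ) :
    esymmQ n rr j = (∏ i : Fin n, (1 + C (rr i) * X)).coeff j := by
  have : (∏ i : Fin n, (1 + C (rr i) * X)) =
      ∑ t ∈ (Finset.univ : Finset (Fin n)).powerset, C (∏ i ∈ t, rr i) * X ^ t.card := by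
    have := Finset.prod_add (fun i : Fin n => C (rr i) * X) (fun _ => (1 : Polynomial ℚ))
      Finset.univ
    simp only [add_comm (1 : Polynomial ℚ)] at this ⊢
    rw [this]
    refine Finset.sum_congr rfl fun t _ => ?_
    rw [Finset.prod_const_one, mul_one, Finset.prod_mul_distrib, Finset.prod_const,
      show Polynomial.C (∏ i ∈ t, rr i) = ∏ i ∈ t, Polynomial.C (rr i) from
        map_prod (Polynomial.C : ℚ →+* Polynomial ℚ) rr t]
  rw [this, finset_sum_coeff]
  simp only [coeff_C_mul, coeff_X_pow, mul_ite, mul_one, mul_zero]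
  rw [esymmQ]
  have hsub : (Finset.univ : Finset (Fin n)).powersetCard j ⊆
      (Finset.univ : Finset (Fin n)).powerset := by
    intro t ht; simp
  have hzero : ∀ t ∈ (Finset.univ : Finset (Fin n)).powerset,
      t ∉ (Finset.univ : Finset (Fin n)).powersetCard j →
        (if j = t.card then ∏ i ∈ t, rr i else 0) = 0 := by
    intro t ht hnt
    rw [Finset.mem_powersetCard] at hnt
    simp only [Finset.mem_powerset] at ht
    have : t.card ≠ j := fun h => hnt ⟨ht, h⟩
    simp [Ne.symm this]
  rw [← Finset.sum_subset hsub hzero]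
  refine Finset.sum_congr rfl fun t ht => ?_
  rw [Finset.mem_powersetCard] at ht
  simp [ht.2]

theorem fan_predegree (n : ℕ) (r : ℚ) (rr : Fin n → ℚ)
    (P : Polynomial ℚ)
    (hP : P = ∏ i : Fin n, (1 + C (rr i) * X + C ((rr i) ^ 2 / 2) * X ^ 2)) :
    (7 : ℕ).factorial *
        (((1 + C r * X + C (r ^ 2 / 2) * X ^ 2) * truncPoly P 5).coeff 7) =
      630 * r ^ 2 *
        (esymmQ n rr 2 * esymmQ n rr 3 - esymmQ n rr 1 * esymmQ n rr 4 - esymmQ n rr 5) := by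
  obtain ⟨hq0, hq1, hq2, hq3, hq4, hq5, hp0, hp1, hp2, hp3, hp4, hp5⟩ := key_coeffs n rr
  have hco : ((1 + C r * X + C (r ^ 2 / 2) * X ^ 2) * truncPoly P 5).coeff 7 =
      (truncPoly P 5).coeff 7 + r * (truncPoly P 5).coeff 6 +
        (r ^ 2 / 2) * (truncPoly P 5).coeff 5 := coeff_quad_mul r (r ^ 2 / 2) _ 5
  rw [hco, truncPoly_coeff, truncPoly_coeff, truncPoly_coeff]
  norm_num [Nat.factorial]
  have e1 := esymmQ_eq_coeff n rr 1
  have e2 := esymmQ_eq_coeff n rr 2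
  have e3 := esymmQ_eq_coeff n rr 3
  have e4 := esymmQ_eq_coeff n rr 4
  have e5 := esymmQ_eq_coeff n rr 5
  rw [e1, e2, e3, e4, e5, hq1, hP]
  set Qc2 := (∏ i : Fin n, (1 + C (rr i) * X)).coeff 2
  set Qc3 := (∏ i : Fin n, (1 + C (rr i) * X)).coeff 3
  set Qc4 := (∏ i : Fin n, (1 + C (rr i) * X)).coeff 4
  set Qc5 := (∏ i : Fin n, (1 + C (rr i) * X)).coeff 5
  linear_combination (2520 * r ^ 2 / 120) * hp5
    - (630 * r ^ 2 * Qc3 / 2) * hq2 - (630 * r ^ 2 * (powQ n rr 1 ^ 2 - powQ n rr 2) / 12) * hq3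
    + (630 * r ^ 2 * powQ n rr 1 / 24) * hq4 + (630 * r ^ 2 / 120) * hq5
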